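/- In the (α, β)-hitting game, no player (probabilistic strategy) can guarantee to win in o(α·β) rounds with high probability; in particular, for any strategy, the expected number of rounds to guess all β pairs of the hidden target set R is Ω(α·β). -/

import Mathlib

/-! The `(α, β)`-hitting game. The referee secretly picks an injection
`f : Fin β → Fin α` (identifying the visible set `A` with `Fin α`); the secret target set
is `R = {(f 1, 1), …, (f β, β)}`, where `f` is uniformly distributed over injections
(a uniformly random sequence of `β` distinct elements of `A`). Each round the player
(a possibly randomized automaton: a strategy map from the history of yes/no answers to
the next guess, together with a uniformly random seed `r : ρ`) proposes a guess
`(x, y) ∈ A × [β]`; the referee answers whether `(x, y)` is currently in `R`, removing it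
from `R` if so. The player wins once every pair of `R` has been guessed. -/

/-- The referee's answer to guess `g`, given the secret `f` and the list `prev` of
previous guesses: `g` is in the current target set iff `g = (f y, y)` and `g` was not
guessed (and hence removed) before. -/
def hitResp {α β : ℕ} (f : Fin β → Fin α) (g : Fin α × Fin β)
    (prev : List (Fin α × Fin β)) : Bool :=
  decide (f g.2 = g.1 ∧ g ∉ prev)

/-- The play of a (deterministic) strategy `σ` (mapping answer histories to guesses)
against secret `f`: after `n` rounds, the list of answers received and of guesses made. -/
def hitPlay {α β : ℕ} (σ : List Bool → Fin α × Fin β) (f : Fin β → Fin α) :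
    ℕ → List Bool × List (Fin α × Fin β)
  | 0 => ([], [])
  | n + 1 =>
    let p := hitPlay σ f n
    let g := σ p.1
    (p.1 ++ [hitResp f g p.2], p.2 ++ [g])

/-- The guess made by strategy `σ` against secret `f` in round `n` (0-indexed). -/
def hitGuess {α β : ℕ} (σ : List Bool → Fin α × Fin β) (f : Fin β → Fin α) (n : ℕ) :
    Fin α × Fin β :=
  σ (hitPlay σ f n).1

/-- The player has won after `t` rounds: every element `(f i, i)` of the target set has
been guessed in some earlier round. -/
def hitWins {α β : ℕ} (σ : List Bool → Fin α × Fin β) (f : Fin β → Fin α) (t : ℕ) :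
    Prop :=
  ∀ i : Fin β, ∃ j < t, hitGuess σ f j = (f i, i)


open Finset

/-- `(n+1)^n ≤ 3 * n^n`, via `1 + 1/n ≤ exp(1/n)` and `e < 3`. -/
lemma aux_succ_pow_le (n : ℕ) : ((n : ℝ) + 1) ^ n ≤ 3 * (n : ℝ) ^ n := by
  rcases Nat.eq_zero_or_pos n with h | h
  · subst h; norm_num
  have hn : (0:ℝ) < n := by exact_mod_cast h
  have h1 : (n : ℝ) + 1 ≤ n * Real.exp (1 / n) := by
    have := Real.add_one_le_exp (1 / (n:ℝ))
    calc (n:ℝ) + 1 = n * (1/n + 1) := by field_simp; ring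
    _ ≤ n * Real.exp (1/n) := by nlinarith [Real.add_one_le_exp (1 / (n:ℝ))]
  calc ((n:ℝ)+1)^n ≤ ((n:ℝ) * Real.exp (1/n))^n := by
        apply pow_le_pow_left₀ (by positivity) h1
    _ = (n:ℝ)^n * Real.exp (1/n) ^ n := mul_pow _ _ _
    _ = (n:ℝ)^n * Real.exp 1 := by
        rw [← Real.exp_nat_mul]
        congr 1
        field_simp
    _ ≤ 3 * (n:ℝ)^n := by
        nlinarith [Real.exp_one_lt_d9, pow_pos hn n]

/-- Stirling-type lower bound: `n^n ≤ 3^n * n!`. -/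
lemma aux_pow_le_factorial (n : ℕ) : n ^ n ≤ 3 ^ n * n.factorial := by
  have : ∀ n : ℕ, ((n:ℝ)) ^ n ≤ 3 ^ n * n.factorial := by
    intro n
    induction n with
    | zero => norm_num
    | succ n ih =>
      have h2 : ((n:ℝ)+1) ^ n ≤ 3 * (n:ℝ)^n := aux_succ_pow_le n
      have h3 : (0:ℝ) ≤ (n:ℝ)+1 := by positivity
      calc ((n+1:ℕ):ℝ) ^ (n+1) = ((n:ℝ)+1) * ((n:ℝ)+1)^n := by push_cast; ring
      _ ≤ ((n:ℝ)+1) * (3 * (n:ℝ)^n) := by nlinarith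
      _ ≤ ((n:ℝ)+1) * (3 * (3^n * n.factorial)) := by nlinarith [pow_pos (by norm_num : (0:ℝ)<3) n]
      _ = 3^(n+1) * ((n+1:ℕ).factorial) := by rw [Nat.factorial_succ]; push_cast; ring
  exact_mod_cast this n

/-- `a^b ≤ b^b * C(a,b)` for `b ≤ a`. -/
lemma aux_pow_le_choose : ∀ b a : ℕ, b ≤ a → a ^ b ≤ b ^ b * a.choose b := by
  intro b
  induction b with
  | zero => simp
  | succ b ih =>
    intro a hba
    obtain ⟨a, rfl⟩ : ∃ a', a = a' + 1 := ⟨a - 1, by omega⟩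
    have hba' : b ≤ a := by omega
    have iha := ih a hba'
    have hid : (a+1) * a.choose b = (a+1).choose (b+1) * (b+1) := Nat.add_one_mul_choose_eq a b
    have h1 : (a+1)^b * b^b ≤ (b+1)^b * a^b := by
      rw [← mul_pow, ← mul_pow]
      exact Nat.pow_le_pow_left (by nlinarith) b
    have hbb : 0 < b^b := by
      rcases Nat.eq_zero_or_pos b with h | h
      · subst h; norm_num
      · exact pow_pos h b
    have hpos : 0 < b^b * (b+1) := Nat.mul_pos hbb (by omega)
    apply Nat.le_of_mul_le_mul_left _ hpos
    calc b^b*(b+1) * (a+1)^(b+1)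
        = ((a+1)^b * b^b) * ((b+1)*(a+1)) := by ring
      _ ≤ ((b+1)^b * a^b) * ((b+1)*(a+1)) := Nat.mul_le_mul_right _ h1
      _ = a^b * ((b+1)^b * ((b+1)*(a+1))) := by ring
      _ ≤ (b^b * a.choose b) * ((b+1)^b * ((b+1)*(a+1))) := Nat.mul_le_mul_right _ iha
      _ = (b+1)^b * b^b * (b+1) * ((a+1) * a.choose b) := by ring
      _ = (b+1)^b * b^b * (b+1) * ((a+1).choose (b+1) * (b+1)) := by rw [hid]
      _ = b^b*(b+1) * ((b+1)^(b+1) * (a+1).choose (b+1)) := by ring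

/-- The key counting inequality: `2 * C(ab/18, b) ≤ a·(a-1)⋯(a-b+1)`. -/
lemma aux_key (a b : ℕ) (hb : 1 ≤ b) (hba : b < a) :
    2 * ((a * b / 18).choose b) ≤ a.descFactorial b := by
  set m := a * b / 18 with hm
  have hK : 0 < b.factorial * 18^b * b^b * 9^b :=
    Nat.mul_pos (Nat.mul_pos (Nat.mul_pos b.factorial_pos (pow_pos (by norm_num) b))
      (pow_pos (by omega) b)) (pow_pos (by norm_num) b)
  apply Nat.le_of_mul_le_mul_right _ hK
  have step1 : b.factorial * m.choose b ≤ m ^ b := by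
    rw [← Nat.descFactorial_eq_factorial_mul_choose]; exact Nat.descFactorial_le_pow m b
  have step2 : (m*18)^b ≤ (a*b)^b := Nat.pow_le_pow_left (Nat.div_mul_le_self _ _) b
  have step3 : b^b ≤ 3^b * b.factorial := aux_pow_le_factorial b
  have step4 : a^b ≤ b^b * a.choose b := aux_pow_le_choose b a hba.le
  have step5 : 2 ≤ 2^b := by
    calc 2 = 2^1 := (pow_one 2).symm
    _ ≤ 2^b := Nat.pow_le_pow_right (by norm_num) hb
  calc 2 * m.choose b * (b.factorial * 18^b * b^b * 9^b)
      = (b.factorial * m.choose b) * (2 * 18^b * b^b * 9^b) := by ring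
    _ ≤ m^b * (2 * 18^b * b^b * 9^b) := Nat.mul_le_mul_right _ step1
    _ = (m*18)^b * (2 * b^b * 9^b) := by rw [mul_pow]; ring
    _ ≤ (a*b)^b * (2 * b^b * 9^b) := Nat.mul_le_mul_right _ step2
    _ = a^b * (2 * b^b * b^b * 9^b) := by rw [mul_pow]; ring
    _ ≤ (b^b * a.choose b) * (2 * b^b * b^b * 9^b) := Nat.mul_le_mul_right _ step4
    _ = a.choose b * (2 * 9^b) * (b^b * (b^b * b^b)) := by ring
    _ ≤ a.choose b * (2 * 9^b) * (b^b * ((3^b*b.factorial) * (3^b*b.factorial))) := by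
        apply Nat.mul_le_mul_left
        apply Nat.mul_le_mul_left
        exact Nat.mul_le_mul step3 step3
    _ = a.choose b * b.factorial * (2 * b.factorial * b^b * (9^b * 9^b)) := by
        have : (3:ℕ)^b * 3^b = 9^b := by rw [← mul_pow]; norm_num
        rw [← this]; ring
    _ ≤ a.choose b * b.factorial * (2^b * b.factorial * b^b * (9^b * 9^b)) := by
        apply Nat.mul_le_mul_left
        apply Nat.mul_le_mul_right
        apply Nat.mul_le_mul_right
        exact Nat.mul_le_mul_right _ step5
    _ = a.descFactorial b * (b.factorial * 18^b * b^b * 9^b) := by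
        rw [Nat.descFactorial_eq_factorial_mul_choose]
        have : (18:ℕ)^b = 2^b * 9^b := by rw [← mul_pow]; norm_num
        rw [this]; ring
open Finset

section Game

variable {a b : ℕ} (σ : List Bool → Fin a × Fin b) (f f' : Fin b → Fin a)

/-- The response received in round `n`. -/
def hResp (n : ℕ) : Bool := hitResp f (hitGuess σ f n) (hitPlay σ f n).2

lemma hitPlay_eq (n : ℕ) :
    hitPlay σ f n = ((List.range n).map (hResp σ f), (List.range n).map (hitGuess σ f)) := by
  induction n with
  | zero => simp [hitPlay]
  | succ n ih =>
    have : hitPlay σ f (n+1)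
        = ((hitPlay σ f n).1 ++ [hResp σ f n], (hitPlay σ f n).2 ++ [hitGuess σ f n]) := rfl
    rw [this, ih, List.range_succ]
    simp

lemma hitGuess_eq (n : ℕ) : hitGuess σ f n = σ ((List.range n).map (hResp σ f)) := by
  rw [hitGuess, hitPlay_eq]

lemma hitWins_mono {t t' : ℕ} (h : t ≤ t') (hw : hitWins σ f t) : hitWins σ f t' := by
  intro i
  obtain ⟨j, hj, hg⟩ := hw i
  exact ⟨j, lt_of_lt_of_le hj h, hg⟩

/-- If two secrets yield the same responses up to round `t`, they yield the same guesses. -/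
lemma guess_eq_of_resp_eq {t : ℕ} (h : ∀ j < t, hResp σ f j = hResp σ f' j) :
    ∀ n < t, hitGuess σ f n = hitGuess σ f' n := by
  intro n hn
  rw [hitGuess_eq, hitGuess_eq]
  congr 1
  apply List.map_congr_left
  intro j hj
  exact h j (lt_of_lt_of_le (List.mem_range.1 hj) hn.le)

/-- At the first round where `(f i, i)` is guessed, the response is `true`. -/
lemma resp_find_true (i : Fin b) {t : ℕ}
    (hex : ∃ j, hitGuess σ f j = (f i, i) ∧ j < t) :
    hResp σ f (Nat.find hex) = true ∧ Nat.find hex < t := by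
  classical
  obtain ⟨hg, hlt⟩ := Nat.find_spec hex
  refine ⟨?_, hlt⟩
  have hprev : (f i, i) ∉ (hitPlay σ f (Nat.find hex)).2 := by
    rw [hitPlay_eq]
    simp only [List.mem_map, List.mem_range, not_exists, not_and]
    intro k hk
    intro hgk
    exact Nat.find_min hex hk ⟨hgk, hk.trans hlt⟩
  rw [hResp, hg, hitResp]
  simp [hprev]

/-- Injectivity: the set of "yes" rounds determines the secret, among secrets
winning by time `t`. -/
lemma secret_eq_of_filter_eq {t : ℕ} (hw : hitWins σ f t) (hw' : hitWins σ f' t)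
    (h : (range t).filter (fun j => hResp σ f j = true)
       = (range t).filter (fun j => hResp σ f' j = true)) : f = f' := by
  classical
  have hresp : ∀ j < t, hResp σ f j = hResp σ f' j := by
    intro j hj
    have := Finset.ext_iff.1 h j
    simp only [mem_filter, mem_range, hj, true_and] at this
    cases hb1 : hResp σ f j <;> cases hb2 : hResp σ f' j <;> simp_all
  have hguess := guess_eq_of_resp_eq σ f f' hresp
  funext i
  have hex : ∃ j, hitGuess σ f j = (f i, i) ∧ j < t := by
    obtain ⟨j, hj, hg⟩ := hw i
    exact ⟨j, hg, hj⟩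
  obtain ⟨hr, hlt⟩ := resp_find_true σ f i hex
  obtain ⟨hg, -⟩ := Nat.find_spec hex
  have hr' : hResp σ f' (Nat.find hex) = true := (hresp _ hlt) ▸ hr
  rw [hResp, ← hguess _ hlt, hg, hitResp] at hr'
  have := of_decide_eq_true hr'
  exact this.1.symm

/-- Exactly `b` rounds get a "yes" answer by the time the player has won. -/
lemma card_filter_resp {t : ℕ} (hw : hitWins σ f t) :
    ((range t).filter (fun j => hResp σ f j = true)).card = b := by
  classical
  have hex : ∀ i : Fin b, ∃ j, hitGuess σ f j = (f i, i) ∧ j < t := by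
    intro i
    obtain ⟨j, hj, hg⟩ := hw i
    exact ⟨j, hg, hj⟩
  set ψ : Fin b → ℕ := fun i => Nat.find (hex i) with hψ
  have hg : ∀ i, hitGuess σ f (ψ i) = (f i, i) := fun i => (Nat.find_spec (hex i)).1
  have hinj : Function.Injective ψ := by
    intro i i' hii
    have : (f i, i) = (f i', i') := by rw [← hg i, ← hg i', hii]
    exact (Prod.ext_iff.1 this).2
  have himg : (range t).filter (fun j => hResp σ f j = true) = image ψ univ := by
    ext j
    simp only [mem_filter, mem_range, mem_image, mem_univ, true_and]
    constructor
    · rintro ⟨hjt, hr⟩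
      have hd := of_decide_eq_true hr
      set g := hitGuess σ f j with hgj
      set i := g.2 with hi
      have hgfi : hitGuess σ f j = (f i, i) := by
        rw [← hgj]; exact Prod.ext hd.1.symm rfl
      refine ⟨i, ?_⟩
      have hle : ψ i ≤ j := Nat.find_le ⟨hgfi, hjt⟩
      rcases eq_or_lt_of_le hle with heq | hlt
      · exact heq
      · exfalso
        have hmem : g ∈ (hitPlay σ f j).2 := by
          rw [hitPlay_eq]
          simp only [List.mem_map, List.mem_range]
          exact ⟨ψ i, hlt, by rw [hg i, ← hgfi, ← hgj]⟩
        exact hd.2 hmem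
    · rintro ⟨i, rfl⟩
      obtain ⟨hr, hlt⟩ := resp_find_true σ f i (hex i)
      exact ⟨hlt, hr⟩
  rw [himg, Finset.card_image_of_injective _ hinj, Finset.card_univ, Fintype.card_fin]

/-- Counting: at most `C(t, b)` injective secrets can be beaten within `t` rounds. -/
lemma count_wins (t : ℕ) [Fintype {f : Fin b → Fin a // Function.Injective f}]
    [DecidablePred fun f : {f : Fin b → Fin a // Function.Injective f} => hitWins σ f.1 t] :
    ((univ : Finset {f : Fin b → Fin a // Function.Injective f}).filter
      (fun f => hitWins σ f.1 t)).card ≤ t.choose b := by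
  classical
  have hmap : ∀ f ∈ (univ : Finset {f : Fin b → Fin a // Function.Injective f}).filter
      (fun f => hitWins σ f.1 t),
      (range t).filter (fun j => hResp σ f.1 j = true) ∈ (range t).powersetCard b := by
    intro f hf
    rw [mem_filter] at hf
    rw [mem_powersetCard]
    exact ⟨filter_subset _ _, card_filter_resp σ f.1 hf.2⟩
  calc ((univ : Finset {f : Fin b → Fin a // Function.Injective f}).filter
      (fun f => hitWins σ f.1 t)).card
      ≤ ((range t).powersetCard b).card := by
        apply Finset.card_le_card_of_injOn
          (fun f => (range t).filter (fun j => hResp σ f.1 j = true)) (fun f hf => hmap f hf)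
        intro f hf f' hf' hfe
        rw [mem_coe, mem_filter] at hf hf'
        exact Subtype.ext (secret_eq_of_filter_eq σ f.1 f'.1 hf.2 hf'.2 hfe)
    _ = t.choose b := by rw [Finset.card_powersetCard, card_range]

end Game

open scoped Classical in
/-- Expected-time lower bound for a fixed (deterministic) strategy `σ`. -/
lemma aux_sum_bound {a b : ℕ} (σ : List Bool → Fin a × Fin b)
    [Fintype {f : Fin b → Fin a // Function.Injective f}] (m : ℕ)
    (hkey : 2 * m.choose b ≤ Fintype.card {f : Fin b → Fin a // Function.Injective f})
    (hw : ∀ f : {f : Fin b → Fin a // Function.Injective f}, ∃ t, hitWins σ f.1 t) :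
    (m + 1) * Fintype.card {f : Fin b → Fin a // Function.Injective f}
      ≤ 2 * ∑ f : {f : Fin b → Fin a // Function.Injective f}, Nat.find (hw f) := by
  have h1 : ∀ f : {f : Fin b → Fin a // Function.Injective f}, ((range (m+1)).filter (fun t => ¬ hitWins σ f.1 t)).card
      ≤ Nat.find (hw f) := by
    intro f
    have hsub : (range (m+1)).filter (fun t => ¬ hitWins σ f.1 t)
        ⊆ range (Nat.find (hw f)) := by
      intro t ht
      rw [mem_filter] at ht
      rw [mem_range]
      by_contra hle
      push_neg at hle
      exact ht.2 (hitWins_mono σ f.1 hle (Nat.find_spec (hw f)))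
    simpa using card_le_card hsub
  have h2 : ∑ f : {f : Fin b → Fin a // Function.Injective f}, ((range (m+1)).filter (fun t => ¬ hitWins σ f.1 t)).card
      = ∑ t ∈ range (m+1), ((univ : Finset {f : Fin b → Fin a // Function.Injective f}).filter (fun f => ¬ hitWins σ f.1 t)).card := by
    simp only [card_filter]
    rw [Finset.sum_comm]
  have h3 : ∀ t ∈ range (m+1), Fintype.card {f : Fin b → Fin a // Function.Injective f}
      ≤ 2 * ((univ : Finset {f : Fin b → Fin a // Function.Injective f}).filter (fun f => ¬ hitWins σ f.1 t)).card := by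
    intro t ht
    rw [mem_range] at ht
    have hc : ((univ : Finset {f : Fin b → Fin a // Function.Injective f}).filter (fun f => hitWins σ f.1 t)).card ≤ t.choose b :=
      count_wins σ t
    have hmono : t.choose b ≤ m.choose b := Nat.choose_le_choose b (by omega)
    have hsplit := Finset.card_filter_add_card_filter_not
      (s := (univ : Finset {f : Fin b → Fin a // Function.Injective f})) (p := fun f => hitWins σ f.1 t)
    rw [Finset.card_univ] at hsplit
    omega
  calc (m+1) * Fintype.card {f : Fin b → Fin a // Function.Injective f} = ∑ _t ∈ range (m+1), Fintype.card {f : Fin b → Fin a // Function.Injective f} := by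
        rw [sum_const, card_range, smul_eq_mul]
    _ ≤ ∑ t ∈ range (m+1), 2 * ((univ : Finset {f : Fin b → Fin a // Function.Injective f}).filter (fun f => ¬ hitWins σ f.1 t)).card :=
        sum_le_sum h3
    _ = 2 * ∑ t ∈ range (m+1), ((univ : Finset {f : Fin b → Fin a // Function.Injective f}).filter (fun f => ¬ hitWins σ f.1 t)).card :=
        (mul_sum _ _ _).symm
    _ = 2 * ∑ f : {f : Fin b → Fin a // Function.Injective f}, ((range (m+1)).filter (fun t => ¬ hitWins σ f.1 t)).card := by rw [h2]
    _ ≤ 2 * ∑ f : {f : Fin b → Fin a // Function.Injective f}, Nat.find (hw f) :=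
        Nat.mul_le_mul_left _ (sum_le_sum fun f _ => h1 f)

open scoped Classical in
/-- No player can win the `(α, β)`-hitting game in `o(α·β)` rounds with high probability:
there is a universal constant `c > 0` such that for every `β < α`, every seed space `ρ`
and every randomized strategy `σ` that always eventually wins, the expected number of
rounds until the target set is exhausted (over the uniformly random injective secret `f`
and the uniform seed) is at least `c·α·β`. -/
theorem stmt_15 :
    ∃ c : ℝ, 0 < c ∧
      ∀ (α β : ℕ), 1 ≤ β → β < α →
        ∀ (ρ : Type) [Fintype ρ] [Nonempty ρ]
          (σ : ρ → List Bool → Fin α × Fin β)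
          (hwin : ∀ (f : {f : Fin β → Fin α // Function.Injective f}) (r : ρ),
            ∃ t, hitWins (σ r) f.1 t),
          c * α * β ≤
            (∑ f : {f : Fin β → Fin α // Function.Injective f}, ∑ r : ρ,
                (Nat.find (hwin f r) : ℝ)) /
              ((Nat.card {f : Fin β → Fin α // Function.Injective f} : ℝ) *
                (Fintype.card ρ : ℝ)) := by
  classical
  refine ⟨1/36, by norm_num, ?_⟩
  intro a b hb hba ρ _ _ σ hwin
  set m := a * b / 18 with hm
  have hNc : Nat.card {f : Fin b → Fin a // Function.Injective f} = a.descFactorial b := by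
    rw [Nat.card_congr (Equiv.subtypeInjectiveEquivEmbedding (Fin b) (Fin a)),
      Nat.card_eq_fintype_card, Fintype.card_embedding_eq, Fintype.card_fin, Fintype.card_fin]
  have hN : Fintype.card {f : Fin b → Fin a // Function.Injective f} = a.descFactorial b := by
    rw [← Nat.card_eq_fintype_card, hNc]
  have hkey : 2 * m.choose b ≤ Fintype.card {f : Fin b → Fin a // Function.Injective f} := by
    rw [hN]; exact aux_key a b hb hba
  have htot : (m+1) * a.descFactorial b * Fintype.card ρ
      ≤ 2 * ∑ f : {f : Fin b → Fin a // Function.Injective f}, ∑ r : ρ,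
          Nat.find (hwin f r) := by
    rw [Finset.sum_comm]
    calc (m+1) * a.descFactorial b * Fintype.card ρ
        = ∑ _r : ρ, (m+1) * a.descFactorial b := by
          rw [Finset.sum_const, Finset.card_univ, smul_eq_mul, mul_comm (Fintype.card ρ) _]
      _ ≤ ∑ r : ρ, 2 * ∑ f : {f : Fin b → Fin a // Function.Injective f},
            Nat.find (hwin f r) := by
          apply Finset.sum_le_sum
          intro r _
          have := aux_sum_bound (σ r) m hkey (fun f => hwin f r)
          rwa [hN] at this
      _ = 2 * ∑ r : ρ, ∑ f : {f : Fin b → Fin a // Function.Injective f},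
            Nat.find (hwin f r) := (Finset.mul_sum _ _ _).symm
  have hDpos : 0 < a.descFactorial b := by
    rcases Nat.eq_zero_or_pos (a.descFactorial b) with h | h
    · exact absurd (Nat.descFactorial_eq_zero_iff_lt.1 h) (by omega)
    · exact h
  have hPpos : 0 < Fintype.card ρ := Fintype.card_pos
  rw [hNc]
  have hden : (0:ℝ) < (a.descFactorial b : ℝ) * (Fintype.card ρ : ℝ) := by
    have := hDpos; have := hPpos; positivity
  rw [le_div_iff₀ hden]
  have hcast : ((m:ℝ)+1) * (a.descFactorial b : ℝ) * (Fintype.card ρ : ℝ)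
      ≤ 2 * ∑ f : {f : Fin b → Fin a // Function.Injective f}, ∑ r : ρ,
          (Nat.find (hwin f r) : ℝ) := by
    exact_mod_cast htot
  have hab : (a:ℝ) * b ≤ 18 * ((m:ℝ)+1) := by
    have : a * b ≤ 18 * (m + 1) := by omega
    exact_mod_cast this
  nlinarith [hcast, hab, hden, mul_nonneg (mul_nonneg (le_of_lt hden)
    (sub_nonneg.2 hab)) (by norm_num : (0:ℝ) ≤ 1/36)]
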